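/- Let 0 < s_y < R < π/2 and let u(s) = arccos(cos(s − s_y)·cos(R)/cos(s)). Then for every s ∈ (−R, R), u′(s) = −cos(R)·sin(s_y)/(sin(u(s))·cos(s)²) < 0; consequently u is monotone decreasing and cos(u(s)) ≥ cos(R + s_y) for all s ∈ [−R, R]. -/

import Mathlib

open Real

theorem stmt_7 (sy R : ℝ) (hsy : 0 < sy) (hR : sy < R) (hR' : R < π / 2)
    (u : ℝ → ℝ)
    (hu : ∀ s : ℝ, u s = Real.arccos (Real.cos (s - sy) * Real.cos R / Real.cos s)) :
    (∀ s ∈ Set.Ioo (-R) R,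
        deriv u s = -(Real.cos R * Real.sin sy) / (Real.sin (u s) * Real.cos s ^ 2) ∧
        deriv u s < 0) ∧
    StrictAntiOn u (Set.Icc (-R) R) ∧
    ∀ s ∈ Set.Icc (-R) R, Real.cos (u s) ≥ Real.cos (R + sy) := by
  have hpi := Real.pi_pos
  have hRpos : 0 < R := hsy.trans hR
  set f : ℝ → ℝ := fun s => Real.cos (s - sy) * Real.cos R / Real.cos s with hf
  have hueq : u = fun s => Real.arccos (f s) := by funext s; exact hu s
  -- cos s > 0 on [-R, R]
  have hcos : ∀ s ∈ Set.Icc (-R) R, 0 < Real.cos s := by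
    intro s hs
    apply Real.cos_pos_of_mem_Ioo
    constructor <;> [linarith [hs.1]; linarith [hs.2]]
  have hsinsy : 0 < Real.sin sy := Real.sin_pos_of_pos_of_lt_pi hsy (by linarith)
  have hcosR : 0 < Real.cos R := Real.cos_pos_of_mem_Ioo ⟨by linarith, hR'⟩
  -- key identities
  have hid1 : ∀ s : ℝ, Real.cos (s - sy) * Real.cos R
      = Real.cos (R + sy) * Real.cos s + Real.sin (s + R) * Real.sin sy := by
    intro s; rw [Real.cos_sub, Real.cos_add, Real.sin_add]; ring
  have hid2 : ∀ s : ℝ, Real.cos (s - sy) * Real.cos R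
      = Real.cos (R - sy) * Real.cos s - Real.sin (R - s) * Real.sin sy := by
    intro s; rw [Real.cos_sub, Real.cos_sub, Real.sin_sub]; ring
  -- lower bound : f s ≥ cos (R + sy)
  have hfge : ∀ s ∈ Set.Icc (-R) R, Real.cos (R + sy) ≤ f s := by
    intro s hs
    have hc := hcos s hs
    show Real.cos (R + sy) ≤ Real.cos (s - sy) * Real.cos R / Real.cos s
    rw [le_div_iff₀ hc, hid1 s]
    have h1 : 0 ≤ Real.sin (s + R) :=
      Real.sin_nonneg_of_nonneg_of_le_pi (by linarith [hs.1]) (by linarith [hs.2])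
    nlinarith
  -- upper bound : f s ≤ cos (R - sy)
  have hfle : ∀ s ∈ Set.Icc (-R) R, f s ≤ Real.cos (R - sy) := by
    intro s hs
    have hc := hcos s hs
    show Real.cos (s - sy) * Real.cos R / Real.cos s ≤ Real.cos (R - sy)
    rw [div_le_iff₀ hc, hid2 s]
    have h1 : 0 ≤ Real.sin (R - s) :=
      Real.sin_nonneg_of_nonneg_of_le_pi (by linarith [hs.2]) (by linarith [hs.1])
    nlinarith
  have hcosRsy1 : Real.cos (R - sy) < 1 := by
    have := Real.cos_lt_cos_of_nonneg_of_le_pi (le_refl (0:ℝ)) (by linarith) (by linarith : (0:ℝ) < R - sy)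
    simpa using this
  have hcosRsy2 : -1 < Real.cos (R + sy) := by
    have := Real.cos_lt_cos_of_nonneg_of_le_pi (by linarith : (0:ℝ) ≤ R + sy) (le_refl π) (by linarith)
    simpa using this
  have hflt : ∀ s ∈ Set.Icc (-R) R, f s < 1 := fun s hs => lt_of_le_of_lt (hfle s hs) hcosRsy1
  have hfgt : ∀ s ∈ Set.Icc (-R) R, -1 < f s := fun s hs => lt_of_lt_of_le hcosRsy2 (hfge s hs)
  have hsq : ∀ s ∈ Set.Icc (-R) R, 0 < 1 - f s ^ 2 := by
    intro s hs
    nlinarith [hflt s hs, hfgt s hs]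
  -- derivative of f
  have hdf : ∀ s ∈ Set.Icc (-R) R,
      HasDerivAt f (Real.cos R * Real.sin sy / Real.cos s ^ 2) s := by
    intro s hs
    have hc := (hcos s hs).ne'
    have h1 : HasDerivAt (fun t => Real.cos (t - sy) * Real.cos R)
        (-Real.sin (s - sy) * Real.cos R) s := by
      have := ((Real.hasDerivAt_cos (s - sy)).comp s ((hasDerivAt_id s).sub_const sy)).mul_const
        (Real.cos R)
      simpa using this
    have h2 := h1.div (Real.hasDerivAt_cos s) hc
    refine h2.congr_deriv ?_
    symm
    rw [Real.sin_sub, Real.cos_sub]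
    field_simp
    linear_combination (-(Real.sin sy)) * (Real.sin_sq_add_cos_sq s)
  -- derivative of u on the open interval
  have hdu : ∀ s ∈ Set.Ioo (-R) R,
      HasDerivAt u (-(1 / Real.sqrt (1 - f s ^ 2)) * (Real.cos R * Real.sin sy / Real.cos s ^ 2)) s := by
    intro s hs
    have hs' : s ∈ Set.Icc (-R) R := Set.mem_Icc_of_Ioo hs
    have harc : HasDerivAt Real.arccos (-(1 / Real.sqrt (1 - f s ^ 2))) (f s) :=
      Real.hasDerivAt_arccos (hfgt s hs').ne' (hflt s hs').ne
    have := harc.comp s (hdf s hs')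
    rw [hueq]
    exact this
  have hsinu : ∀ s ∈ Set.Icc (-R) R, Real.sin (u s) = Real.sqrt (1 - f s ^ 2) := by
    intro s hs
    rw [hu s, Real.sin_arccos]
  have hmain : ∀ s ∈ Set.Ioo (-R) R,
      deriv u s = -(Real.cos R * Real.sin sy) / (Real.sin (u s) * Real.cos s ^ 2) ∧
      deriv u s < 0 := by
    intro s hs
    have hs' : s ∈ Set.Icc (-R) R := Set.mem_Icc_of_Ioo hs
    have hsqrt : 0 < Real.sqrt (1 - f s ^ 2) := Real.sqrt_pos.mpr (hsq s hs')
    have hc := hcos s hs'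
    have hder := (hdu s hs).deriv
    have heq : deriv u s = -(Real.cos R * Real.sin sy) / (Real.sin (u s) * Real.cos s ^ 2) := by
      rw [hder, hsinu s hs']
      field_simp
    refine ⟨heq, ?_⟩
    rw [heq, hsinu s hs']
    apply div_neg_of_neg_of_pos
    · nlinarith
    · positivity
  refine ⟨hmain, ?_, ?_⟩
  · -- strict antitonicity
    apply strictAntiOn_of_deriv_neg (convex_Icc _ _)
    · rw [hueq]
      apply Real.continuous_arccos.comp_continuousOn
      apply ContinuousOn.div
      · exact (Continuous.comp Real.continuous_cos (continuous_id.sub continuous_const)).continuousOn.mul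
          continuousOn_const
      · exact Real.continuous_cos.continuousOn
      · intro s hs; exact (hcos s hs).ne'
    · intro s hs
      rw [interior_Icc] at hs
      exact (hmain s hs).2
  · intro s hs
    rw [hu s]
    rw [Real.cos_arccos (hfgt s hs).le (hflt s hs).le]
    exact hfge s hs
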